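/- arXiv:1511.06661 — 3 statements merged into one kernel-verified Lean document; each statement's English description precedes it below -/
import Mathlib

section
/- Let G be a finite simple graph with n vertices and m edges. The F-index of the suspension K₁ + G (join of a single vertex with G) equals F(G) + 3M₁(G) + n³ + 6m + n. -/
open Finset

/-- Degree of a vertex: the number of its neighbors. -/
noncomputable def degN {V : Type*} (G : SimpleGraph V) (v : V) : ℕ :=
  Nat.card (G.neighborSet v)

/-- F-index: the sum of cubes of the vertex degrees. -/
noncomputable def Findex {V : Type*} [Fintype V] (G : SimpleGraph V) : ℕ :=
  ∑ v, (degN G v) ^ 3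

/-- First Zagreb index: the sum of squares of the vertex degrees. -/
noncomputable def zagrebM1 {V : Type*} [Fintype V] (G : SimpleGraph V) : ℕ :=
  ∑ v, (degN G v) ^ 2

/-- Number of edges of a graph. -/
noncomputable def numEdges {V : Type*} (G : SimpleGraph V) : ℕ :=
  Nat.card G.edgeSet

/-- Join of two simple graphs: the disjoint union together with all edges
joining a vertex of the first graph to a vertex of the second. -/
def graphJoin {V₁ V₂ : Type*} (G₁ : SimpleGraph V₁) (G₂ : SimpleGraph V₂) :
    SimpleGraph (V₁ ⊕ V₂) where
  Adj x y :=
    match x, y with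
    | .inl a, .inl b => G₁.Adj a b
    | .inr a, .inr b => G₂.Adj a b
    | _, _ => True
  symm := ⟨by rintro (a | a) (b | b) h <;> first | exact h.symm | trivial⟩
  loopless := ⟨by
    rintro (a | a) h
    · exact G₁.loopless.irrefl a h
    · exact G₂.loopless.irrefl a h⟩

lemma degN_inl {V : Type*} [Fintype V] (G : SimpleGraph V) (a : Fin 1) :
    degN (graphJoin (⊥ : SimpleGraph (Fin 1)) G) (.inl a) = Fintype.card V := by
  have e : (graphJoin (⊥ : SimpleGraph (Fin 1)) G).neighborSet (.inl a) ≃ V := by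
    refine (Equiv.ofBijective (fun v => ⟨Sum.inr v, trivial⟩) ?_).symm
    constructor
    · intro x y h
      simpa using congrArg Subtype.val h
    · rintro ⟨(b | w), h⟩
      · exact absurd h (by simp [graphJoin, SimpleGraph.neighborSet])
      · exact ⟨w, rfl⟩
  rw [degN, Nat.card_congr e, Nat.card_eq_fintype_card]

lemma degN_inr {V : Type*} [Fintype V] (G : SimpleGraph V) (v : V) :
    degN (graphJoin (⊥ : SimpleGraph (Fin 1)) G) (.inr v) = degN G v + 1 := by
  classical
  have e : (Fin 1) ⊕ (G.neighborSet v) ≃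
      (graphJoin (⊥ : SimpleGraph (Fin 1)) G).neighborSet (.inr v) := by
    refine Equiv.ofBijective
      (fun x => match x with
        | .inl a => ⟨Sum.inl a, trivial⟩
        | .inr ⟨w, hw⟩ => ⟨Sum.inr w, hw⟩) ?_
    constructor
    · rintro (a | ⟨w, hw⟩) (b | ⟨u, hu⟩) h <;>
        simp_all [Subtype.ext_iff, Sum.inl.injEq, Sum.inr.injEq]
    · rintro ⟨(a | w), h⟩
      · exact ⟨.inl a, rfl⟩
      · exact ⟨.inr ⟨w, h⟩, rfl⟩
  rw [degN, ← Nat.card_congr e, Nat.card_eq_fintype_card, Fintype.card_sum,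
    Fintype.card_fin, degN, Nat.card_eq_fintype_card]
  ring

lemma sum_degN {V : Type*} [Fintype V] (G : SimpleGraph V) :
    ∑ v, degN G v = 2 * numEdges G := by
  classical
  have h : ∀ v, degN G v = G.degree v := by
    intro v
    rw [degN, Nat.card_eq_fintype_card, SimpleGraph.card_neighborSet_eq_degree]
  simp_rw [h]
  rw [SimpleGraph.sum_degrees_eq_twice_card_edges, numEdges,
    Nat.card_eq_fintype_card, SimpleGraph.edgeFinset, Set.toFinset_card]

theorem Findex_suspension {V : Type*} [Fintype V] (G : SimpleGraph V)
    (n m : ℕ) (hn : Fintype.card V = n) (hm : numEdges G = m) :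
    Findex (graphJoin (⊥ : SimpleGraph (Fin 1)) G) =
      Findex G + 3 * zagrebM1 G + n ^ 3 + 6 * m + n := by
  rw [Findex, Fintype.sum_sum_type]
  simp only [degN_inl, degN_inr, hn]
  have key : ∀ d : ℕ, (d + 1) ^ 3 = d ^ 3 + 3 * d ^ 2 + 3 * d + 1 := fun d => by ring
  simp_rw [key]
  rw [Finset.sum_add_distrib, Finset.sum_add_distrib, Finset.sum_add_distrib,
    ← Finset.mul_sum, ← Finset.mul_sum, sum_degN, hm]
  simp only [Finset.sum_const, Finset.card_univ, Fintype.card_fin, smul_eq_mul,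
    mul_one, hn]
  rw [Findex, zagrebM1]
  ring
end

section
/- Let G₁ and G₂ be finite simple graphs with n₁, n₂ vertices and m₁, m₂ edges. Then F(G₁ □ G₂) = n₂F(G₁) + n₁F(G₂) + 6m₂M₁(G₁) + 6m₁M₁(G₂), where □ denotes the Cartesian product. -/
open Finset

lemma degN_eq_degree {V : Type*} (G : SimpleGraph V) (v : V) [Fintype (G.neighborSet v)] :
    degN G v = G.degree v := by
  rw [degN, Nat.card_eq_fintype_card, ← SimpleGraph.card_neighborSet_eq_degree]

theorem Findex_boxProd {V₁ V₂ : Type*} [Fintype V₁] [Fintype V₂]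
    (G₁ : SimpleGraph V₁) (G₂ : SimpleGraph V₂)
    (n₁ n₂ m₁ m₂ : ℕ) (hn₁ : Fintype.card V₁ = n₁) (hn₂ : Fintype.card V₂ = n₂)
    (hm₁ : numEdges G₁ = m₁) (hm₂ : numEdges G₂ = m₂) :
    Findex (G₁ □ G₂) =
      n₂ * Findex G₁ + n₁ * Findex G₂ + 6 * m₂ * zagrebM1 G₁ + 6 * m₁ * zagrebM1 G₂ := by
  classical
  have hdeg : ∀ x : V₁ × V₂, degN (G₁ □ G₂) x = degN G₁ x.1 + degN G₂ x.2 := by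
    intro x
    rw [degN_eq_degree, degN_eq_degree, degN_eq_degree, SimpleGraph.degree_boxProd]
  have expand : ∀ a b : ℕ, (a + b) ^ 3 = a ^ 3 + 3 * (a ^ 2 * b) + 3 * (a * b ^ 2) + b ^ 3 := by
    intro a b; ring
  rw [Findex, Fintype.sum_prod_type]
  simp_rw [hdeg, expand, Finset.sum_add_distrib, Finset.sum_const, smul_eq_mul,
    ← Finset.mul_sum, ← Finset.sum_mul, Finset.card_univ]
  rw [hn₁, hn₂, show (∑ i : V₂, degN G₂ i) = 2 * m₂ by rw [sum_degN, hm₂],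
    show (∑ i : V₁, degN G₁ i) = 2 * m₁ by rw [sum_degN, hm₁]]
  rw [Findex, Findex, zagrebM1, zagrebM1]
  ring
end

section
/- Let G be a finite simple graph with n vertices and m edges. The F-index of the t-thorny graph Gᵗ (obtained by attaching t pendent vertices to each vertex of G) is F(Gᵗ) = F(G) + 3tM₁(G) + 6mt² + nt³ + nt. -/
open Finset

/-- Corona product of two simple graphs: one copy of `G₁` and, for each vertex
`i` of `G₁`, a copy of `G₂` whose vertices are all joined to `i`. -/
def graphCorona {V₁ V₂ : Type*} (G₁ : SimpleGraph V₁) (G₂ : SimpleGraph V₂) :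
    SimpleGraph (V₁ ⊕ V₁ × V₂) where
  Adj x y :=
    match x, y with
    | .inl u, .inl v => G₁.Adj u v
    | .inl u, .inr p => u = p.1
    | .inr p, .inl u => p.1 = u
    | .inr p, .inr q => p.1 = q.1 ∧ G₂.Adj p.2 q.2
  symm := by
    constructor
    rintro (u | p) (v | q) h
    · exact h.symm
    · exact h.symm
    · exact h.symm
    · exact ⟨h.1.symm, h.2.symm⟩
  loopless := by
    constructor
    rintro (u | p) h
    · exact G₁.loopless.irrefl u h
    · exact G₂.loopless.irrefl p.2 h.2

section aux

variable {V : Type*} [Fintype V] (G : SimpleGraph V) (t : ℕ)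

lemma degN_eq_degree_s16 [DecidableEq V] [DecidableRel G.Adj] (v : V) :
    degN G v = G.degree v := by
  rw [degN, Nat.card_eq_fintype_card, SimpleGraph.card_neighborSet_eq_degree]

def corona_inl_equiv (v : V) :
    ((graphCorona G (⊥ : SimpleGraph (Fin t))).neighborSet (Sum.inl v)) ≃
      (G.neighborSet v) ⊕ Fin t where
  toFun x := match x with
    | ⟨.inl u, h⟩ => Sum.inl ⟨u, h⟩
    | ⟨.inr p, h⟩ => Sum.inr p.2
  invFun x := match x with
    | Sum.inl ⟨u, h⟩ => ⟨Sum.inl u, h⟩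
    | Sum.inr i => ⟨Sum.inr (v, i), rfl⟩
  left_inv := by
    rintro ⟨(u | p), h⟩
    · rfl
    · have : v = p.1 := h
      subst this
      rfl
  right_inv := by
    rintro (⟨u, h⟩ | i) <;> rfl

lemma degN_corona_inl (v : V) :
    degN (graphCorona G (⊥ : SimpleGraph (Fin t))) (Sum.inl v) = degN G v + t := by
  rw [degN, Nat.card_congr (corona_inl_equiv G t v), Nat.card_sum, degN,
    Nat.card_eq_fintype_card (α := Fin t), Fintype.card_fin]

lemma degN_corona_inr (p : V × Fin t) :
    degN (graphCorona G (⊥ : SimpleGraph (Fin t))) (Sum.inr p) = 1 := by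
  have : (graphCorona G (⊥ : SimpleGraph (Fin t))).neighborSet (Sum.inr p)
      = {Sum.inl p.1} := by
    ext x
    rcases x with u | q
    · constructor
      · intro h
        have hh : p.1 = u := h
        simp [hh]
      · intro h
        have : Sum.inl u = Sum.inl p.1 := h
        exact (Sum.inl.inj this).symm
    · constructor
      · rintro ⟨-, h⟩; exact absurd h (by simp)
      · intro h; simp at h
  rw [degN, this]
  simp

lemma sum_degN_eq (hm : numEdges G = m) : ∑ v, degN G v = 2 * m := by
  classical
  have h := SimpleGraph.sum_degrees_eq_twice_card_edges G
  have he : numEdges G = G.edgeFinset.card := by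
    rw [numEdges, Nat.card_eq_fintype_card, SimpleGraph.edgeFinset]
    simp [Set.toFinset_card]
  calc ∑ v, degN G v = ∑ v, G.degree v := by
        exact Finset.sum_congr rfl fun v _ => degN_eq_degree_s16 G v
    _ = 2 * G.edgeFinset.card := h
    _ = 2 * m := by rw [← he, hm]

end aux


theorem Findex_thorny {V : Type*} [Fintype V] (G : SimpleGraph V) (t : ℕ)
    (n m : ℕ) (hn : Fintype.card V = n) (hm : numEdges G = m) :
    Findex (graphCorona G (⊥ : SimpleGraph (Fin t))) =
      Findex G + 3 * t * zagrebM1 G + 6 * m * t ^ 2 + n * t ^ 3 + n * t := by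
  classical
  have hd := sum_degN_eq G hm
  rw [Findex, Fintype.sum_sum_type]
  have h1 : ∀ v : V, degN (graphCorona G (⊥ : SimpleGraph (Fin t))) (Sum.inl v) ^ 3
      = degN G v ^ 3 + 3 * t * degN G v ^ 2 + 3 * t ^ 2 * degN G v + t ^ 3 := by
    intro v; rw [degN_corona_inl]; ring
  have h2 : ∀ p : V × Fin t,
      degN (graphCorona G (⊥ : SimpleGraph (Fin t))) (Sum.inr p) ^ 3 = 1 := by
    intro p; rw [degN_corona_inr]; norm_num
  rw [Finset.sum_congr rfl (fun v _ => h1 v), Finset.sum_congr rfl (fun p _ => h2 p)]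
  simp only [Finset.sum_add_distrib, Finset.sum_const, Finset.card_univ,
    Fintype.card_prod, Fintype.card_fin, ← Finset.mul_sum, hd, hn,
    smul_eq_mul, mul_one]
  rw [← Findex, ← zagrebM1]
  ring
end
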